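/- Let P be a 2-torsion free prime unital ring with a nontrivial idempotent e₁, set e₂ = 1 − e₁, and let D : P → P be a commuting Jordan left centralizer such that e₁ D(m) e₂ = 0 for all m ∈ e₁Pe₂. Then D(m) = 0 for every m ∈ e₁Pe₂. -/
import Mathlib


/-- Lemma 3.1: D(m) = 0 for all m ∈ e₁Pe₂. -/
theorem commuting_jordan_left_centralizer_twelve {P : Type*} [Ring P]
    (htf : ∀ p : P, 2 • p = 0 → p = 0)
    (hprime : ∀ a b : P, (∀ x : P, a * x * b = 0) → a = 0 ∨ b = 0)
    (e₁ : P) (he : e₁ * e₁ = e₁) (he0 : e₁ ≠ 0) (he1 : e₁ ≠ 1)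
    (D : P → P)
    (hadd : ∀ x y : P, D (x + y) = D x + D y)
    (hJ : ∀ p : P, D (p ^ 2) = D p * p)
    (hC : ∀ p : P, D p * p = p * D p)
    (h12 : ∀ m : P, (∃ x : P, m = e₁ * x * (1 - e₁)) → e₁ * D m * (1 - e₁) = 0) :
    ∀ m : P, (∃ x : P, m = e₁ * x * (1 - e₁)) → D m = 0 := by
  rintro m ⟨x, rfl⟩
  set e₂ : P := 1 - e₁ with he₂
  set m : P := e₁ * x * e₂ with hm
  -- basic idempotent facts
  have he12 : e₁ * e₂ = 0 := by rw [he₂, mul_sub, mul_one, he, sub_self]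
  have he21 : e₂ * e₁ = 0 := by rw [he₂, sub_mul, one_mul, he, sub_self]
  have he22 : e₂ * e₂ = e₂ := by
    rw [he₂, sub_mul, one_mul, mul_sub, mul_one, he]; abel
  have he2ne : e₂ ≠ 0 := by
    intro h
    exact he1 (sub_eq_zero.mp h).symm
  -- facts about m
  have hme₁ : m * e₁ = 0 := by rw [hm, mul_assoc, he21, mul_zero]
  have he₁m : e₁ * m = m := by
    rw [hm, show e₁ * (e₁ * x * e₂) = (e₁ * e₁) * x * e₂ by noncomm_ring, he]
  have hme₂ : m * e₂ = m := by
    rw [hm, show e₁ * x * e₂ * e₂ = e₁ * x * (e₂ * e₂) by noncomm_ring, he22]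
  have he₂m : e₂ * m = 0 := by
    rw [hm, show e₂ * (e₁ * x * e₂) = (e₂ * e₁) * x * e₂ by noncomm_ring, he21,
      zero_mul, zero_mul]
  have hmm : m * m = 0 := by
    rw [show m * m = m * e₁ * (x * e₂) by rw [hm]; noncomm_ring, hme₁, zero_mul]
  -- D 0 = 0
  have hD0 : D 0 = 0 := by
    have := hadd 0 0
    simpa using this
  -- D m * m = 0
  have hDmm : D m * m = 0 := by
    have := hJ m
    rw [sq, hmm, hD0] at this
    exact this.symm
  -- D e₁ facts
  have hDe₁ : D e₁ * e₁ = D e₁ := by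
    have := hJ e₁; rw [sq, he] at this; exact this.symm
  have he₁De₁ : e₁ * D e₁ = D e₁ := by rw [← hC, hDe₁]
  -- Step 3 : D m = D m * e₁ + D e₁ * m
  have step3 : D m = D m * e₁ + D e₁ * m := by
    have h1 := hJ (m + e₁)
    have hsq : (m + e₁) ^ 2 = m + e₁ := by
      rw [sq, mul_add, add_mul, add_mul, hmm, hme₁, he₁m, he]
      abel
    rw [hsq, hadd, add_mul, mul_add, mul_add, hDmm, hDe₁] at h1
    -- h1 : D m + D e₁ = 0 + D m * e₁ + (D e₁ * m + D e₁)
    have h2 : D m + D e₁ = (D m * e₁ + D e₁ * m) + D e₁ := by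
      rw [h1]; abel
    exact add_right_cancel h2
  -- Step 4 : D e₁ * m = 0 and hence D m = D m * e₁
  have h4 := h12 m ⟨x, rfl⟩
  have hDe₁m : D e₁ * m = 0 := by
    have hkey : e₁ * D m * e₂ = D e₁ * m := by
      rw [step3, mul_add, add_mul,
        show e₁ * (D m * e₁) * e₂ = e₁ * D m * (e₁ * e₂) by noncomm_ring, he12, mul_zero,
        zero_add, show e₁ * (D e₁ * m) * e₂ = (e₁ * D e₁) * (m * e₂) by noncomm_ring,
        he₁De₁, hme₂]
    rw [← hkey]
    exact h4
  have hDme₁ : D m * e₁ = D m := by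
    nth_rewrite 2 [step3]
    rw [hDe₁m, add_zero]
  have hDme₂ : D m * e₂ = 0 := by
    rw [he₂, mul_sub, mul_one, hDme₁, sub_self]
  -- Step 5 : linearized commuting identity
  have hc2 : ∀ p q : P, D p * q + D q * p = p * D q + q * D p := by
    intro p q
    have hA : D p * p + (D p * q + D q * p) + D q * q = (D p + D q) * (p + q) := by
      noncomm_ring
    have hB : p * D p + (p * D q + q * D p) + q * D q = (p + q) * (D p + D q) := by
      noncomm_ring
    have hAB : D p * p + (D p * q + D q * p) + D q * q
        = p * D p + (p * D q + q * D p) + q * D q := by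
      rw [hA, hB, ← hadd]; exact hC (p + q)
    rw [hC p, hC q] at hAB
    exact add_left_cancel (add_right_cancel hAB)
  -- Step 6 : e₂ * D m = 0
  have step6 : e₂ * D m = 0 := by
    have key : ∀ z : P, e₂ * z * (e₂ * D m) = 0 := by
      intro z
      have h := hc2 (e₂ * z * e₂) m
      have hzero : D m * (e₂ * z * e₂) = 0 := by
        rw [show D m * (e₂ * z * e₂) = (D m * e₂) * (z * e₂) by noncomm_ring, hDme₂, zero_mul]
      rw [hzero, add_zero] at h
      have h' := congrArg (fun t => e₂ * t * e₁) h
      simp only [mul_add, add_mul] at h'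
      rw [show e₂ * (D (e₂ * z * e₂) * m) * e₁ = (e₂ * D (e₂ * z * e₂)) * (m * e₁) by
            noncomm_ring, hme₁, mul_zero] at h'
      rw [show e₂ * (e₂ * z * e₂ * D m) * e₁ = (e₂ * e₂) * z * (e₂ * (D m * e₁)) by
            noncomm_ring, he22, hDme₁] at h'
      rw [show e₂ * (m * D (e₂ * z * e₂)) * e₁ = (e₂ * m) * (D (e₂ * z * e₂) * e₁) by
            noncomm_ring, he₂m, zero_mul, add_zero] at h'
      exact h'.symm
    rcases hprime e₂ (e₂ * D m) key with h | h
    · exact absurd h he2ne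
    · exact h
  have he₁Dm : e₁ * D m = D m := by
    have h1 : e₁ * D m + e₂ * D m = D m := by
      rw [he₂]; noncomm_ring
    rw [step6, add_zero] at h1
    exact h1
  -- Step 7 : D m = 0
  have key : ∀ z : P, e₂ * z * D m = 0 := by
    intro z
    have h := hc2 (e₂ * z * e₁) m
    have hzero : D m * (e₂ * z * e₁) = 0 := by
      rw [show D m * (e₂ * z * e₁) = (D m * e₂) * (z * e₁) by noncomm_ring, hDme₂, zero_mul]
    rw [hzero, add_zero] at h
    have h' := congrArg (fun t => e₂ * t * e₁) h
    simp only [mul_add, add_mul] at h'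
    rw [show e₂ * (D (e₂ * z * e₁) * m) * e₁ = (e₂ * D (e₂ * z * e₁)) * (m * e₁) by
          noncomm_ring, hme₁, mul_zero] at h'
    rw [show e₂ * (e₂ * z * e₁ * D m) * e₁ = (e₂ * e₂) * z * ((e₁ * D m) * e₁) by
          noncomm_ring, he22, he₁Dm, hDme₁] at h'
    rw [show e₂ * (m * D (e₂ * z * e₁)) * e₁ = (e₂ * m) * (D (e₂ * z * e₁) * e₁) by
          noncomm_ring, he₂m, zero_mul, add_zero] at h'
    exact h'.symm
  rcases hprime e₂ (D m) key with h | h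
  · exact absurd h he2ne
  · exact h
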